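/- arXiv:math/0006087 — 4 statements merged into one kernel-verified Lean document; each statement's English description precedes it below -/
import Mathlib

section
/- Let α be a finite type with decidable equality, let σ be a permutation of α, and let a, b ∈ α be points not lying in the same cycle of σ (¬ σ.SameCycle a b; in particular a ≠ b). Let i be the cardinality of the σ-orbit of a and j the cardinality of the σ-orbit of b (so a fixed point has orbit size 1). Then the full cycle type satisfies the multiset identity ct(swap a b * σ) + {i, j} = ct(σ) + {i + j}; i.e. multiplying σ by the transposition (a b) merges the two cycles containing a and b into a single cycle of length i + j and leaves all other cycles unchanged. -/
open scoped Classical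

/-- The full cycle type of a permutation: the multiset of cardinalities of all
orbits, i.e. `cycleType` together with one part `1` for each fixed point. -/
noncomputable def fullCycleType {α : Type*} [Fintype α] [DecidableEq α]
    (σ : Equiv.Perm α) : Multiset ℕ :=
  σ.cycleType + Multiset.replicate (Finset.univ.filter fun a => σ a = a).card 1

/-- The cardinality of the orbit of `a` under `σ` (a fixed point has orbit size 1). -/
noncomputable def orbitSize {α : Type*} [Fintype α] [DecidableEq α]
    (σ : Equiv.Perm α) (a : α) : ℕ :=
  (Finset.univ.filter fun b => σ.SameCycle a b).card

section Aux

open Equiv Equiv.Perm Finset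

set_option linter.unusedSectionVars false

variable {α : Type*} [Fintype α] [DecidableEq α]

lemma orbitSize_pos (σ : Perm α) (x : α) : 0 < orbitSize σ x :=
  Finset.card_pos.2 ⟨x, by simp [orbitSize, Equiv.Perm.SameCycle.rfl]⟩

lemma orbitSize_eq_of_sameCycle {σ : Perm α} {x y : α} (hxy : σ.SameCycle x y) :
    orbitSize σ x = orbitSize σ y := by
  unfold orbitSize; congr 1; ext z
  simp only [Finset.mem_filter, Finset.mem_univ, true_and]
  exact ⟨fun hz => hxy.symm.trans hz, fun hz => hxy.trans hz⟩

lemma orbitSize_eq_one_iff (σ : Perm α) (x : α) : orbitSize σ x = 1 ↔ σ x = x := by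
  constructor
  · intro h1
    by_contra hx
    have hsub : ({x, σ x} : Finset α) ⊆ Finset.univ.filter fun b => σ.SameCycle x b := by
      intro y hy
      simp only [Finset.mem_insert, Finset.mem_singleton] at hy
      rcases hy with rfl | rfl
      · simp [Equiv.Perm.SameCycle.rfl]
      · simp [Equiv.Perm.sameCycle_apply_right.2 Equiv.Perm.SameCycle.rfl]
    have h2 : ({x, σ x} : Finset α).card = 2 := by
      rw [Finset.card_insert_of_notMem (by simpa using (Ne.symm hx)), Finset.card_singleton]
    have := Finset.card_le_card hsub
    rw [h2] at this
    unfold orbitSize at h1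
    omega
  · intro hx
    have : (Finset.univ.filter fun b => σ.SameCycle x b) = {x} := by
      ext y
      simp only [Finset.mem_filter, Finset.mem_univ, true_and, Finset.mem_singleton]
      exact ⟨fun hy => (hy.eq_of_left hx).symm, fun hy => hy ▸ Equiv.Perm.SameCycle.rfl⟩
    unfold orbitSize
    rw [this, Finset.card_singleton]

lemma orbitSize_eq_card_support_cycleOf (σ : Perm α) (x : α) (hx : σ x ≠ x) :
    orbitSize σ x = (σ.cycleOf x).support.card := by
  unfold orbitSize
  congr 1
  ext y
  rw [Equiv.Perm.mem_support, Equiv.Perm.cycleOf_apply]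
  simp only [Finset.mem_filter, Finset.mem_univ, true_and]
  constructor
  · intro hxy
    rw [if_pos hxy]
    exact fun hy => hx (hxy.apply_eq_self_iff.2 hy)
  · intro hy
    by_contra hxy
    rw [if_neg hxy] at hy
    exact hy rfl

lemma count_fullCycleType (σ : Perm α) (n : ℕ) (hn : n ≠ 0) :
    n * (fullCycleType σ).count n
      = (Finset.univ.filter fun x => orbitSize σ x = n).card := by
  rcases Nat.lt_or_ge n 2 with h2 | h2
  · -- n = 1
    have hn1 : n = 1 := by omega
    subst hn1
    have hct : σ.cycleType.count 1 = 0 := by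
      rw [Multiset.count_eq_zero]
      intro hmem
      have := Equiv.Perm.two_le_of_mem_cycleType hmem
      omega
    have hfilter : (Finset.univ.filter fun x => orbitSize σ x = 1)
        = (Finset.univ.filter fun a => σ a = a) := by
      ext x; simp [orbitSize_eq_one_iff]
    rw [hfilter]
    simp [fullCycleType, hct, Multiset.count_replicate]
  · -- n ≥ 2
    have hrep : (Multiset.replicate (Finset.univ.filter fun a => σ a = a).card 1).count n = 0 := by
      rw [Multiset.count_replicate]
      simp only [ite_eq_right_iff]
      omega
    have hct : (fullCycleType σ).count n = (σ.cycleFactorsFinset.filter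
        fun c => c.support.card = n).card := by
      rw [fullCycleType, Multiset.count_add, hrep, add_zero, Equiv.Perm.cycleType_def,
        Multiset.count_map]
      simp only [Finset.card, Finset.filter_val, Function.comp]
      congr 1
      apply Multiset.filter_congr
      intro c _
      simp [eq_comm]
    have hfilter : (Finset.univ.filter fun x => orbitSize σ x = n)
        = (σ.cycleFactorsFinset.filter fun c => c.support.card = n).biUnion
            Equiv.Perm.support := by
      ext x
      simp only [Finset.mem_filter, Finset.mem_univ, true_and, Finset.mem_biUnion]
      constructor
      · intro hx
        have hxfix : σ x ≠ x := by
          intro hfix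
          rw [(orbitSize_eq_one_iff σ x).2 hfix] at hx
          omega
        refine ⟨σ.cycleOf x, ⟨?_, ?_⟩, ?_⟩
        · exact Equiv.Perm.cycleOf_mem_cycleFactorsFinset_iff.2 (Equiv.Perm.mem_support.2 hxfix)
        · rw [← orbitSize_eq_card_support_cycleOf σ x hxfix]; exact hx
        · rw [Equiv.Perm.mem_support_cycleOf_iff]
          exact ⟨Equiv.Perm.SameCycle.rfl, Equiv.Perm.mem_support.2 hxfix⟩
      · rintro ⟨c, ⟨hc, hcard⟩, hxc⟩
        have hcx : c = σ.cycleOf x := Equiv.Perm.cycle_is_cycleOf hxc hc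
        have hxfix : σ x ≠ x :=
          Equiv.Perm.mem_support.1 (Equiv.Perm.mem_cycleFactorsFinset_support_le hc hxc)
        rw [orbitSize_eq_card_support_cycleOf σ x hxfix, ← hcx]
        exact hcard
    rw [hct, hfilter, Finset.card_biUnion]
    · rw [Finset.sum_congr rfl (fun c hc => (Finset.mem_filter.1 hc).2), Finset.sum_const,
        smul_eq_mul, mul_comm]
    · intro c hc d hd hcd
      exact (Equiv.Perm.cycleFactorsFinset_pairwise_disjoint σ (Finset.mem_filter.1 hc).1
        (Finset.mem_filter.1 hd).1 hcd).disjoint_support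

lemma sameCycle_closed {f : Perm α} {P : α → Prop}
    (hstep : ∀ z, P z → P (f z)) (hstep' : ∀ z, P z → P (f⁻¹ z))
    {x y : α} (hx : P x) (hxy : f.SameCycle x y) : P y := by
  obtain ⟨k, rfl⟩ := hxy
  induction k using Int.induction_on with
  | zero => simpa using hx
  | succ k ih =>
    have hk : (f ^ ((k : ℤ) + 1)) x = f ((f ^ (k : ℤ)) x) := by
      rw [add_comm, zpow_one_add]; rfl
    rw [hk]; exact hstep _ ih
  | pred k ih =>
    have hk : (f ^ (-(k : ℤ) - 1)) x = f⁻¹ ((f ^ (-(k : ℤ))) x) := by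
      rw [sub_eq_add_neg, add_comm, zpow_add, zpow_neg_one]; rfl
    rw [hk]; exact hstep' _ ih

lemma sameCycle_swap_mul_self {σ : Perm α} {a b : α} (h : ¬ σ.SameCycle a b) :
    (Equiv.swap a b * σ).SameCycle a b := by
  have hex : ∃ k, 0 < k ∧ (σ ^ k) a = a := ⟨orderOf σ, orderOf_pos σ, by
    rw [pow_orderOf_eq_one]; rfl⟩
  have hipos : 0 < Nat.find hex := (Nat.find_spec hex).1
  have hia : (σ ^ Nat.find hex) a = a := (Nat.find_spec hex).2
  have hmin : ∀ m, 0 < m → m < Nat.find hex → (σ ^ m) a ≠ a := fun m hm hmi hma =>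
    Nat.find_min hex hmi ⟨hm, hma⟩
  have hne_b : ∀ m : ℕ, (σ ^ m) a ≠ b := fun m hm => h ⟨m, by rw [zpow_natCast]; exact hm⟩
  have key : ∀ m, m < Nat.find hex → ((Equiv.swap a b * σ) ^ m) a = (σ ^ m) a := by
    intro m
    induction m with
    | zero => simp
    | succ k ih =>
      intro hk
      have hk' : k < Nat.find hex := Nat.lt_of_succ_lt hk
      rw [pow_succ', Equiv.Perm.mul_apply, ih hk', Equiv.Perm.mul_apply]
      have hs : σ ((σ ^ k) a) = (σ ^ (k + 1)) a := by
        rw [pow_succ', Equiv.Perm.mul_apply]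
      rw [hs]
      exact Equiv.swap_apply_of_ne_of_ne (hmin (k + 1) (Nat.succ_pos k) hk) (hne_b (k + 1))
  obtain ⟨i', hi'⟩ : ∃ i', Nat.find hex = i' + 1 := ⟨Nat.find hex - 1, by omega⟩
  refine ⟨(Nat.find hex : ℤ), ?_⟩
  rw [zpow_natCast, hi', pow_succ', Equiv.Perm.mul_apply, key i' (by omega),
    Equiv.Perm.mul_apply]
  have hs : σ ((σ ^ i') a) = a := by
    have := hia
    rw [hi', pow_succ', Equiv.Perm.mul_apply] at this
    exact this
  rw [hs, Equiv.swap_apply_left]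

lemma sameCycle_swap_mul_iff {σ : Perm α} {a b : α} (h : ¬ σ.SameCycle a b) (x y : α) :
    (Equiv.swap a b * σ).SameCycle x y ↔
      σ.SameCycle x y ∨ (σ.SameCycle x a ∧ σ.SameCycle b y) ∨
        (σ.SameCycle x b ∧ σ.SameCycle a y) := by
  have hab := sameCycle_swap_mul_self h
  set τ := Equiv.swap a b * σ with hτ
  have hστ : ∀ z, σ z = Equiv.swap a b (τ z) := by
    intro z
    rw [hτ, Equiv.Perm.mul_apply, Equiv.swap_apply_self]
  have hτinv : ∀ z, τ⁻¹ z = σ⁻¹ (Equiv.swap a b z) := by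
    intro z
    rw [hτ, mul_inv_rev, Equiv.swap_inv, Equiv.Perm.mul_apply]
  have hσinv : ∀ z, σ⁻¹ z = τ⁻¹ (Equiv.swap a b z) := by
    intro z
    rw [hτinv, Equiv.swap_apply_self]
  constructor
  · intro hxy
    refine sameCycle_closed (f := τ)
      (P := fun z => σ.SameCycle x z ∨ (σ.SameCycle x a ∧ σ.SameCycle b z) ∨
        (σ.SameCycle x b ∧ σ.SameCycle a z)) ?_ ?_ (Or.inl Equiv.Perm.SameCycle.rfl) hxy
    · intro z hz
      have hτz : τ z = Equiv.swap a b (σ z) := by rw [hτ]; rfl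
      rcases eq_or_ne (σ z) a with ha' | ha'
      · rw [hτz, ha', Equiv.swap_apply_left]
        have hza : σ.SameCycle z a := ⟨1, by simpa using ha'⟩
        rcases hz with hz | ⟨hxa, hbz⟩ | ⟨hxb, haz⟩
        · exact Or.inr (Or.inl ⟨hz.trans hza, Equiv.Perm.SameCycle.rfl⟩)
        · exact absurd ((hbz.trans hza).symm) h
        · exact Or.inl hxb
      rcases eq_or_ne (σ z) b with hb' | hb'
      · rw [hτz, hb', Equiv.swap_apply_right]
        have hzb : σ.SameCycle z b := ⟨1, by simpa using hb'⟩
        rcases hz with hz | ⟨hxa, hbz⟩ | ⟨hxb, haz⟩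
        · exact Or.inr (Or.inr ⟨hz.trans hzb, Equiv.Perm.SameCycle.rfl⟩)
        · exact Or.inl hxa
        · exact absurd (haz.trans hzb) h
      · rw [hτz, Equiv.swap_apply_of_ne_of_ne ha' hb']
        have hstep : ∀ w, σ.SameCycle w z → σ.SameCycle w (σ z) := fun w hw =>
          Equiv.Perm.sameCycle_apply_right.2 hw
        rcases hz with hz | ⟨hxa, hbz⟩ | ⟨hxb, haz⟩
        · exact Or.inl (hstep _ hz)
        · exact Or.inr (Or.inl ⟨hxa, hstep _ hbz⟩)
        · exact Or.inr (Or.inr ⟨hxb, hstep _ haz⟩)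
    · intro z hz
      rcases eq_or_ne z a with rfl | ha'
      · rw [hτinv, Equiv.swap_apply_left]
        have hbinv : σ.SameCycle b (σ⁻¹ b) :=
          Equiv.Perm.sameCycle_symm_apply_right.2 Equiv.Perm.SameCycle.rfl
        rcases hz with hz | ⟨hxa, hbz⟩ | ⟨hxb, haz⟩
        · exact Or.inr (Or.inl ⟨hz, hbinv⟩)
        · exact absurd hbz.symm h
        · exact Or.inl (hxb.trans hbinv)
      rcases eq_or_ne z b with rfl | hb'
      · rw [hτinv, Equiv.swap_apply_right]
        have hainv : σ.SameCycle a (σ⁻¹ a) :=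
          Equiv.Perm.sameCycle_symm_apply_right.2 Equiv.Perm.SameCycle.rfl
        rcases hz with hz | ⟨hxa, hbz⟩ | ⟨hxb, haz⟩
        · exact Or.inr (Or.inr ⟨hz, hainv⟩)
        · exact Or.inl (hxa.trans hainv)
        · exact absurd haz h
      · rw [hτinv, Equiv.swap_apply_of_ne_of_ne ha' hb']
        have hstep : ∀ w, σ.SameCycle w z → σ.SameCycle w (σ⁻¹ z) := fun w hw =>
          Equiv.Perm.sameCycle_symm_apply_right.2 hw
        rcases hz with hz | ⟨hxa, hbz⟩ | ⟨hxb, haz⟩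
        · exact Or.inl (hstep _ hz)
        · exact Or.inr (Or.inl ⟨hxa, hstep _ hbz⟩)
        · exact Or.inr (Or.inr ⟨hxb, hstep _ haz⟩)
  · have main : ∀ u v, σ.SameCycle u v → τ.SameCycle u v := by
      intro u v huv
      refine sameCycle_closed (f := σ) (P := fun z => τ.SameCycle u z) ?_ ?_
        Equiv.Perm.SameCycle.rfl huv
      · intro z hz
        have h1 : τ.SameCycle u (τ z) := Equiv.Perm.sameCycle_apply_right.2 hz
        rcases eq_or_ne (τ z) a with ha' | ha'
        · have hb2 : σ z = b := by rw [hστ z, ha', Equiv.swap_apply_left]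
          rw [hb2]
          have h1' : τ.SameCycle u a := ha' ▸ h1
          exact h1'.trans hab
        rcases eq_or_ne (τ z) b with hb' | hb'
        · have ha2 : σ z = a := by rw [hστ z, hb', Equiv.swap_apply_right]
          rw [ha2]
          have h1' : τ.SameCycle u b := hb' ▸ h1
          exact h1'.trans hab.symm
        · have hz2 : σ z = τ z := by rw [hστ z, Equiv.swap_apply_of_ne_of_ne ha' hb']
          rw [hz2]
          exact h1
      · intro z hz
        rcases eq_or_ne z a with hza | ha'
        · have hb2 : σ⁻¹ z = τ⁻¹ b := by rw [hσinv, hza, Equiv.swap_apply_left]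
          rw [hb2]
          have hz' : τ.SameCycle u a := hza ▸ hz
          exact (hz'.trans hab).trans
            (Equiv.Perm.sameCycle_symm_apply_right.2 Equiv.Perm.SameCycle.rfl)
        rcases eq_or_ne z b with hzb | hb'
        · have ha2 : σ⁻¹ z = τ⁻¹ a := by rw [hσinv, hzb, Equiv.swap_apply_right]
          rw [ha2]
          have hz' : τ.SameCycle u b := hzb ▸ hz
          exact (hz'.trans hab.symm).trans
            (Equiv.Perm.sameCycle_symm_apply_right.2 Equiv.Perm.SameCycle.rfl)
        · have hz2 : σ⁻¹ z = τ⁻¹ z := by rw [hσinv, Equiv.swap_apply_of_ne_of_ne ha' hb']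
          rw [hz2]
          exact hz.trans (Equiv.Perm.sameCycle_symm_apply_right.2 Equiv.Perm.SameCycle.rfl)
    rintro (hxy | ⟨hxa, hby⟩ | ⟨hxb, hay⟩)
    · exact main _ _ hxy
    · exact ((main _ _ hxa).trans hab).trans (main _ _ hby)
    · exact ((main _ _ hxb).trans hab.symm).trans (main _ _ hay)

lemma fullCycleType_count_zero (σ : Perm α) : (fullCycleType σ).count 0 = 0 := by
  rw [Multiset.count_eq_zero]
  intro hmem
  rw [fullCycleType, Multiset.mem_add] at hmem
  rcases hmem with hmem | hmem
  · have := Equiv.Perm.two_le_of_mem_cycleType hmem; omega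
  · have := Multiset.eq_of_mem_replicate hmem; omega

end Aux

open Equiv Equiv.Perm Finset in
theorem swap_mul_merges_cycles {α : Type*} [Fintype α] [DecidableEq α]
    (σ : Equiv.Perm α) (a b : α) (h : ¬ σ.SameCycle a b) :
    fullCycleType (Equiv.swap a b * σ) + {orbitSize σ a, orbitSize σ b}
      = fullCycleType σ + {orbitSize σ a + orbitSize σ b} := by
  set τ := Equiv.swap a b * σ with hτ
  set i := orbitSize σ a with hi
  set j := orbitSize σ b with hj
  set A := Finset.univ.filter (fun x => σ.SameCycle a x) with hA
  set B := Finset.univ.filter (fun x => σ.SameCycle b x) with hB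
  have hAcard : A.card = i := rfl
  have hBcard : B.card = j := rfl
  have hdisj : Disjoint A B := by
    rw [Finset.disjoint_left]
    intro x hxA hxB
    rw [hA, Finset.mem_filter] at hxA
    rw [hB, Finset.mem_filter] at hxB
    exact h (hxA.2.trans hxB.2.symm)
  set M := A ∪ B with hM
  have hMcard : M.card = i + j := by
    rw [hM, Finset.card_union_of_disjoint hdisj, hAcard, hBcard]
  have horbM : ∀ x ∈ M, (Finset.univ.filter fun y => τ.SameCycle x y) = M := by
    intro x hx
    rw [hM, Finset.mem_union, hA, hB, Finset.mem_filter, Finset.mem_filter] at hx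
    ext y
    simp only [Finset.mem_filter, Finset.mem_univ, true_and, hM, Finset.mem_union, hA, hB]
    rw [hτ, sameCycle_swap_mul_iff h]
    rcases hx with ⟨_, hax⟩ | ⟨_, hbx⟩
    · constructor
      · rintro (hxy | ⟨hxa, hby⟩ | ⟨hxb, hay⟩)
        · exact Or.inl (hax.trans hxy)
        · exact Or.inr hby
        · exact absurd (hax.trans hxb) h
      · rintro (hay | hby)
        · exact Or.inl (hax.symm.trans hay)
        · exact Or.inr (Or.inl ⟨hax.symm, hby⟩)
    · constructor
      · rintro (hxy | ⟨hxa, hby⟩ | ⟨hxb, hay⟩)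
        · exact Or.inr (hbx.trans hxy)
        · exact absurd (hbx.trans hxa).symm h
        · exact Or.inl hay
      · rintro (hay | hby)
        · exact Or.inr (Or.inr ⟨hbx.symm, hay⟩)
        · exact Or.inl (hbx.symm.trans hby)
  have horbM' : ∀ x ∈ M, orbitSize τ x = i + j := by
    intro x hx
    unfold orbitSize
    rw [horbM x hx, hMcard]
  have horbout : ∀ x, x ∉ M → orbitSize τ x = orbitSize σ x := by
    intro x hx
    have hax : ¬ σ.SameCycle a x := fun hc =>
      hx (Finset.mem_union_left _ (by simp [hA, hc]))
    have hbx : ¬ σ.SameCycle b x := fun hc =>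
      hx (Finset.mem_union_right _ (by simp [hB, hc]))
    unfold orbitSize
    congr 1
    ext y
    simp only [Finset.mem_filter, Finset.mem_univ, true_and]
    rw [hτ, sameCycle_swap_mul_iff h]
    constructor
    · rintro (hxy | ⟨hxa, _⟩ | ⟨hxb, _⟩)
      · exact hxy
      · exact absurd hxa.symm hax
      · exact absurd hxb.symm hbx
    · exact Or.inl
  have horbA : ∀ x ∈ A, orbitSize σ x = i := by
    intro x hx
    rw [hA, Finset.mem_filter] at hx
    exact (orbitSize_eq_of_sameCycle hx.2).symm
  have horbB : ∀ x ∈ B, orbitSize σ x = j := by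
    intro x hx
    rw [hB, Finset.mem_filter] at hx
    exact (orbitSize_eq_of_sameCycle hx.2).symm
  have hip : 0 < i := orbitSize_pos σ a
  have hjp : 0 < j := orbitSize_pos σ b
  apply Multiset.ext.2
  intro n
  rcases Nat.eq_zero_or_pos n with rfl | hn
  · rw [Multiset.count_add, Multiset.count_add, fullCycleType_count_zero,
      fullCycleType_count_zero]
    have h1 : ({i, j} : Multiset ℕ).count 0 = 0 := by
      rw [Multiset.count_eq_zero]
      simp only [Multiset.insert_eq_cons, Multiset.mem_cons, Multiset.mem_singleton]
      omega
    have h2 : ({i + j} : Multiset ℕ).count 0 = 0 := by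
      rw [Multiset.count_eq_zero, Multiset.mem_singleton]
      omega
    rw [h1, h2]
  · have hCτM : (Finset.univ.filter fun x => orbitSize τ x = n) ∩ M
        = if n = i + j then M else ∅ := by
      ext x
      simp only [Finset.mem_inter, Finset.mem_filter, Finset.mem_univ, true_and]
      split_ifs with hij
      · exact ⟨fun hx => hx.2, fun hx => ⟨by rw [horbM' x hx, hij], hx⟩⟩
      · simp only [Finset.notMem_empty, iff_false, not_and]
        intro hcount hx
        exact hij (by rw [← hcount, horbM' x hx])
    have hCσA : (Finset.univ.filter fun x => orbitSize σ x = n) ∩ A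
        = if n = i then A else ∅ := by
      ext x
      simp only [Finset.mem_inter, Finset.mem_filter, Finset.mem_univ, true_and]
      split_ifs with hni
      · exact ⟨fun hx => hx.2, fun hx => ⟨by rw [horbA x hx, hni], hx⟩⟩
      · simp only [Finset.notMem_empty, iff_false, not_and]
        intro hcount hx
        exact hni (by rw [← hcount, horbA x hx])
    have hCσB : (Finset.univ.filter fun x => orbitSize σ x = n) ∩ B
        = if n = j then B else ∅ := by
      ext x
      simp only [Finset.mem_inter, Finset.mem_filter, Finset.mem_univ, true_and]
      split_ifs with hni
      · exact ⟨fun hx => hx.2, fun hx => ⟨by rw [horbB x hx, hni], hx⟩⟩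
      · simp only [Finset.notMem_empty, iff_false, not_and]
        intro hcount hx
        exact hni (by rw [← hcount, horbB x hx])
    have hsdiff : (Finset.univ.filter fun x => orbitSize τ x = n) \ M
        = (Finset.univ.filter fun x => orbitSize σ x = n) \ M := by
      ext x
      simp only [Finset.mem_sdiff, Finset.mem_filter, Finset.mem_univ, true_and]
      constructor
      · rintro ⟨hc, hx⟩; exact ⟨by rw [← horbout x hx]; exact hc, hx⟩
      · rintro ⟨hc, hx⟩; exact ⟨by rw [horbout x hx]; exact hc, hx⟩
    have hcount_pair : ({i, j} : Multiset ℕ).count n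
        = (if n = i then 1 else 0) + (if n = j then 1 else 0) := by
      rw [Multiset.insert_eq_cons, Multiset.count_cons, Multiset.count_singleton]
      split_ifs <;> omega
    apply Nat.eq_of_mul_eq_mul_left hn
    rw [Multiset.count_add, Multiset.count_add, Nat.mul_add, Nat.mul_add,
      count_fullCycleType τ n hn.ne', count_fullCycleType σ n hn.ne']
    have hcardτ : (Finset.univ.filter fun x => orbitSize τ x = n).card
        = (if n = i + j then i + j else 0)
          + ((Finset.univ.filter fun x => orbitSize σ x = n) \ M).card := by
      rw [← Finset.card_inter_add_card_sdiff
        (Finset.univ.filter fun x => orbitSize τ x = n) M, hCτM, hsdiff]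
      congr 1
      split_ifs
      · exact hMcard
      · simp
    have hcardσ : (Finset.univ.filter fun x => orbitSize σ x = n).card
        = (if n = i then i else 0) + (if n = j then j else 0)
          + ((Finset.univ.filter fun x => orbitSize σ x = n) \ M).card := by
      rw [← Finset.card_inter_add_card_sdiff
        (Finset.univ.filter fun x => orbitSize σ x = n) M]
      congr 1
      rw [hM, Finset.inter_union_distrib_left, Finset.card_union_of_disjoint
        (hdisj.mono Finset.inter_subset_right Finset.inter_subset_right), hCσA, hCσB]
      congr 1 <;> split_ifs <;> simp [hAcard, hBcard]
    rw [hcardτ, hcardσ, hcount_pair, Multiset.count_singleton]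
    split_ifs <;> ring_nf <;> omega
end

section
/- Let α be a finite type with decidable equality, let σ be a permutation of α, let x ∈ α have σ-orbit S of cardinality k ≥ 2, and let 0 < i < k. Then the number of unordered pairs {a, b} of distinct elements of S such that ct(swap a b * σ) + {k} = ct(σ) + {i, k − i} (i.e. such that left multiplication by the transposition (a b) splits the cycle S into cycles of lengths i and k − i) equals k if i ≠ k − i, and equals k/2 if i = k − i (so k is even). -/
open scoped Classical

open Equiv Equiv.Perm Finset

section Aux
variable {α : Type*} [Fintype α] [DecidableEq α]

lemma fct_def' (σ : Perm α) :
    fullCycleType σ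
      = σ.cycleType + Multiset.replicate (Fintype.card α - σ.support.card) 1 := by
  have : (Finset.univ.filter fun a => σ a = a) = σ.supportᶜ := by
    ext a; simp [Equiv.Perm.mem_support]
  rw [fullCycleType, this, Finset.card_compl]

lemma fct_mul_of_disjoint {σ τ : Perm α} (h : σ.Disjoint τ) :
    fullCycleType (σ * τ) + Multiset.replicate (Fintype.card α) 1
      = fullCycleType σ + fullCycleType τ := by
  have hcard : (σ.support ∪ τ.support).card = σ.support.card + τ.support.card :=
    Finset.card_union_of_disjoint h.disjoint_support
  have h1 : σ.support.card ≤ Fintype.card α := by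
    simpa using Finset.card_le_univ σ.support
  have h2 : τ.support.card ≤ Fintype.card α := by
    simpa using Finset.card_le_univ τ.support
  have h3 : σ.support.card + τ.support.card ≤ Fintype.card α := by
    rw [← hcard]; simpa using Finset.card_le_univ _
  rw [fct_def', fct_def', fct_def', h.cycleType_mul, h.support_mul, hcard]
  have hrep : Multiset.replicate (Fintype.card α - (σ.support.card + τ.support.card)) (1:ℕ)
      + Multiset.replicate (Fintype.card α) 1
      = Multiset.replicate (Fintype.card α - σ.support.card) 1
        + Multiset.replicate (Fintype.card α - τ.support.card) 1 := by
    rw [← Multiset.replicate_add, ← Multiset.replicate_add]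
    congr 1
    omega
  calc σ.cycleType + τ.cycleType
        + Multiset.replicate (Fintype.card α - (σ.support.card + τ.support.card)) 1
        + Multiset.replicate (Fintype.card α) 1
      = σ.cycleType + τ.cycleType
        + (Multiset.replicate (Fintype.card α - (σ.support.card + τ.support.card)) 1
          + Multiset.replicate (Fintype.card α) 1) := by rw [add_assoc]
    _ = σ.cycleType + τ.cycleType
        + (Multiset.replicate (Fintype.card α - σ.support.card) 1
          + Multiset.replicate (Fintype.card α - τ.support.card) 1) := by rw [hrep]
    _ = σ.cycleType + Multiset.replicate (Fintype.card α - σ.support.card) 1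
        + (τ.cycleType + Multiset.replicate (Fintype.card α - τ.support.card) 1) := by
          abel

lemma fct_of_isCycleOn {g : Perm α} {A : Finset α} (hA : A.Nonempty)
    (hc : g.IsCycleOn (A : Set α)) (hs : g.support ⊆ A) :
    fullCycleType g = {A.card} + Multiset.replicate (Fintype.card α - A.card) 1 := by
  rcases eq_or_lt_of_le (show 1 ≤ A.card from hA.card_pos) with h1 | h2
  · -- A.card = 1
    have hg : g = 1 := by
      have : g.support.card = 0 := by
        have hle : g.support.card ≤ A.card := Finset.card_le_card hs
        have := g.card_support_ne_one
        omega
      rwa [Finset.card_eq_zero, Equiv.Perm.support_eq_empty_iff] at this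
    subst hg
    rw [fct_def', Equiv.Perm.cycleType_one, Equiv.Perm.support_one]
    have hN : 1 ≤ Fintype.card α := by
      obtain ⟨a, _⟩ := hA
      exact Fintype.card_pos_iff.2 ⟨a⟩
    rw [zero_add, Finset.card_empty, Nat.sub_zero, ← h1]
    conv_lhs => rw [show Fintype.card α = (Fintype.card α - 1) + 1 by omega]
    rw [Multiset.replicate_succ, Multiset.singleton_add]
  · -- 2 ≤ A.card
    have hnt : (A : Set α).Nontrivial := Finset.one_lt_card_iff_nontrivial.1 h2
    have hsupp : g.support = A := by
      refine subset_antisymm hs fun y hy => ?_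
      exact Equiv.Perm.mem_support.2 (hc.apply_ne hnt (by exact_mod_cast hy))
    have hgc : g.IsCycle := by
      obtain ⟨a, ha⟩ := hA
      refine ⟨a, hc.apply_ne hnt (by exact_mod_cast ha), fun y hy => ?_⟩
      exact hc.2 (by exact_mod_cast ha) (by exact_mod_cast (hsupp ▸ Equiv.Perm.mem_support.2 hy))
    rw [fct_def', hgc.cycleType, hsupp]

lemma restrict_pow_eq {g : Perm α} {A : Finset α} (hinv : ∀ y, (y ∈ A) ↔ (g y ∈ A))
    (n : ℕ) : ∀ y ∈ A, ((Equiv.Perm.ofSubtype (g.subtypePerm (fun y => (hinv y).symm))) ^ n) y = (g ^ n) y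
      ∧ (g ^ n) y ∈ A := by
  induction n with
  | zero => simp
  | succ n ih =>
    intro y hy
    obtain ⟨h1, h2⟩ := ih y hy
    constructor
    · rw [pow_succ', pow_succ', Equiv.Perm.mul_apply, Equiv.Perm.mul_apply, h1,
        ofSubtype_subtypePerm_of_mem (fun y => (hinv y).symm) h2]
    · rw [pow_succ', Equiv.Perm.mul_apply]
      exact (hinv _).1 h2

lemma restrict_isCycleOn {g : Perm α} {A : Finset α} (hinv : ∀ y, (y ∈ A) ↔ (g y ∈ A))
    (hc : g.IsCycleOn (A : Set α)) :
    (Equiv.Perm.ofSubtype (g.subtypePerm (fun y => (hinv y).symm))).IsCycleOn (A : Set α) := by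
  constructor
  · exact hc.1.congr fun y hy =>
      (ofSubtype_subtypePerm_of_mem (fun y => (hinv y).symm) (Finset.mem_coe.1 hy)).symm
  · intro y hy z hz
    obtain ⟨n, _, he⟩ := hc.exists_pow_eq (Finset.mem_coe.1 hy) (Finset.mem_coe.1 hz)
    exact ⟨n, by rw [zpow_natCast, (restrict_pow_eq hinv n y (Finset.mem_coe.1 hy)).1, he]⟩

lemma restrict_support_subset {g : Perm α} {A : Finset α} (hinv : ∀ y, (y ∈ A) ↔ (g y ∈ A)) :
    (Equiv.Perm.ofSubtype (g.subtypePerm (fun y => (hinv y).symm))).support ⊆ A := fun y hy => by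
  by_contra h
  exact (Equiv.Perm.mem_support.1 hy) (ofSubtype_subtypePerm_of_not_mem (fun y => (hinv y).symm) h)

/-- orbit lemma: the orbit of `a` under `swap a b * g`. -/
lemma swap_mul_isCycleOn {g : Perm α} {a b : α} {j : ℕ} (hj : 0 < j) (hab : a ≠ b)
    (hb : (g ^ j) a = b) (hm : ∀ m, 0 < m → m < j → (g ^ m) a ≠ a ∧ (g ^ m) a ≠ b) :
    ((Finset.range j).image fun m => (g ^ m) a).card = j ∧
    (Equiv.swap a b * g).IsCycleOn (((Finset.range j).image fun m => (g ^ m) a : Finset α) : Set α) := by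
  set w := Equiv.swap a b * g with hw
  set A := (Finset.range j).image fun m => (g ^ m) a with hA
  -- w^m a = g^m a for m < j
  have claim1 : ∀ m, m < j → (w ^ m) a = (g ^ m) a := by
    intro m
    induction m with
    | zero => simp
    | succ m ih =>
      intro hmj
      have e1 : (w ^ (m+1)) a = w ((w ^ m) a) := by rw [pow_succ']; rfl
      have e2 : (g ^ (m+1)) a = g ((g ^ m) a) := by rw [pow_succ']; rfl
      rw [e1, e2, ih (by omega)]
      show (Equiv.swap a b) (g ((g ^ m) a)) = g ((g ^ m) a)
      rw [show g ((g ^ m) a) = (g ^ (m+1)) a from e2.symm]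
      exact Equiv.swap_apply_of_ne_of_ne (hm (m+1) (by omega) hmj).1 (hm (m+1) (by omega) hmj).2
  have claim2 : (w ^ j) a = a := by
    have hj1 : j = (j - 1) + 1 := by omega
    have e1 : w ^ j = w * w ^ (j - 1) := by
      conv_lhs => rw [hj1, pow_succ']
    rw [e1, Equiv.Perm.mul_apply, claim1 (j-1) (by omega)]
    show (Equiv.swap a b) (g ((g ^ (j-1)) a)) = a
    have e2 : (g ^ j) a = g ((g ^ (j-1)) a) := by
      conv_lhs => rw [hj1, pow_succ']
      rfl
    rw [← e2, hb, Equiv.swap_apply_right]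
  -- injectivity
  have hinj : Set.InjOn (fun m => (g ^ m) a) (Finset.range j) := by
    intro m hm' n hn' hmn
    simp only [Finset.coe_range, Set.mem_Iio] at hm' hn'
    by_contra hne
    rcases Nat.lt_or_ge m n with h | h
    · have : (g ^ m) a = (g ^ m) ((g ^ (n - m)) a) := by
        rw [← Equiv.Perm.mul_apply, ← pow_add, show m + (n - m) = n by omega]; exact hmn
      have h2 : (g ^ (n - m)) a = a := ((g ^ m).injective this.symm)
      exact (hm (n - m) (by omega) (by omega)).1 h2
    · have hlt : n < m := by omega
      have : (g ^ n) a = (g ^ n) ((g ^ (m - n)) a) := by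
        rw [← Equiv.Perm.mul_apply, ← pow_add, show n + (m - n) = m by omega]; exact hmn.symm
      have h2 : (g ^ (m - n)) a = a := ((g ^ n).injective this.symm)
      exact (hm (m - n) (by omega) (by omega)).1 h2
  have hcard : A.card = j := by
    rw [hA, Finset.card_image_of_injOn hinj, Finset.card_range]
  have haA : a ∈ A := by
    rw [hA]
    exact Finset.mem_image.2 ⟨0, Finset.mem_range.2 hj, by simp⟩
  -- maps to
  have hmaps : ∀ y ∈ A, w y ∈ A := by
    intro y hy
    rw [hA] at hy
    obtain ⟨m, hm', rfl⟩ := Finset.mem_image.1 hy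
    rw [Finset.mem_range] at hm'
    rw [← claim1 m hm', ← Equiv.Perm.mul_apply, ← pow_succ']
    rcases Nat.lt_or_ge (m+1) j with h | h
    · rw [claim1 (m+1) h]
      exact Finset.mem_image.2 ⟨m+1, Finset.mem_range.2 h, rfl⟩
    · have : m + 1 = j := by omega
      rw [this, claim2]
      exact haA
  have himg : A.image w = A := by
    apply Finset.eq_of_subset_of_card_le
    · intro y hy
      obtain ⟨z, hz, rfl⟩ := Finset.mem_image.1 hy
      exact hmaps z hz
    · rw [Finset.card_image_of_injective _ w.injective]
  refine ⟨hcard, ⟨⟨fun y hy => hmaps y (Finset.mem_coe.1 hy), w.injective.injOn, ?_⟩, ?_⟩⟩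
  · intro y hy
    rw [← Finset.coe_image, himg]
    exact hy
  · -- same cycle
    have horb : ∀ y ∈ A, ∃ m, (w ^ m) a = y := by
      intro y hy
      rw [hA] at hy
      obtain ⟨m, hm', rfl⟩ := Finset.mem_image.1 hy
      rw [Finset.mem_range] at hm'
      exact ⟨m, claim1 m hm'⟩
    intro y hy z hz
    obtain ⟨m, hmy⟩ := horb y (Finset.mem_coe.1 hy)
    obtain ⟨n, hnz⟩ := horb z (Finset.mem_coe.1 hz)
    have h1 : w.SameCycle a y := ⟨m, by rw [zpow_natCast, hmy]⟩
    have h2 : w.SameCycle a z := ⟨n, by rw [zpow_natCast, hnz]⟩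
    exact h1.symm.trans h2

lemma split_main {σ : Perm α} {x : α} {S : Finset α}
    (hS : S = Finset.univ.filter fun b => σ.SameCycle x b) {k : ℕ} (hk : S.card = k)
    (hk2 : 2 ≤ k) {a b : α} (ha : a ∈ S) (hb : b ∈ S) {j : ℕ} (hj : 0 < j) (hjk : j < k)
    (hab : (σ ^ j) a = b) :
    fullCycleType (Equiv.swap a b * σ) + {k} = fullCycleType σ + {j, k - j} := by
  have hxS : x ∈ S := by rw [hS]; simp [Equiv.Perm.SameCycle.refl]
  have hx : σ x ≠ x := by
    obtain ⟨y, hy, hyx⟩ := Finset.exists_mem_ne (by omega : 1 < S.card) x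
    intro h
    apply hyx
    rw [hS, Finset.mem_filter] at hy
    obtain ⟨n, hn⟩ := hy.2
    rw [← hn, Equiv.Perm.zpow_apply_eq_self_of_apply_eq_self h]
  have hSsup : S = (σ.cycleOf x).support := by
    ext y
    rw [Equiv.Perm.mem_support_cycleOf_iff]
    simp [hS, Equiv.Perm.mem_support, hx]
  have hcyc : σ.IsCycleOn (S : Set α) := by
    rw [hSsup]; exact σ.isCycleOn_support_cycleOf x
  have hne : a ≠ b := by
    intro h
    have hd : S.card ∣ j := (hcyc.pow_apply_eq ha).1 (h ▸ hab)
    rw [hk] at hd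
    have := Nat.le_of_dvd hj hd
    omega
  have hkN : k ≤ Fintype.card α := by
    rw [← hk, ← Finset.card_univ]; exact Finset.card_le_univ S
  -- cycle factor decomposition
  have hmemc : σ.cycleOf x ∈ σ.cycleFactorsFinset :=
    Equiv.Perm.cycleOf_mem_cycleFactorsFinset_iff.2 (Equiv.Perm.mem_support.2 hx)
  set c := σ.cycleOf x with hc
  set τ := σ * c⁻¹ with hτ
  have hdisj : Equiv.Perm.Disjoint τ c :=
    Equiv.Perm.disjoint_mul_inv_of_mem_cycleFactorsFinset hmemc
  have hστ : τ * c = σ := inv_mul_cancel_right σ c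
  have hsupc : c.support = S := hSsup.symm
  have hsupτ : _root_.Disjoint τ.support S := by
    rw [← hsupc]; exact hdisj.disjoint_support
  have powmem : ∀ y ∈ S, ∀ m : ℕ, (σ ^ m) y ∈ S := by
    intro y hy m
    rw [hS, Finset.mem_filter] at hy ⊢
    exact ⟨Finset.mem_univ _, hy.2.trans ⟨(m : ℤ), by rw [zpow_natCast]⟩⟩
  -- orbits A and B
  set A := (Finset.range j).image fun m => (σ ^ m) a with hAdef
  set B := (Finset.range (k - j)).image fun m => (σ ^ m) b with hBdef
  have hmA : ∀ m, 0 < m → m < j → (σ ^ m) a ≠ a ∧ (σ ^ m) a ≠ b := by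
    intro m hm0 hmj
    constructor
    · intro h
      have hd : S.card ∣ m := (hcyc.pow_apply_eq ha).1 h
      rw [hk] at hd
      have := Nat.le_of_dvd hm0 hd
      omega
    · intro h
      have hmod : m ≡ j [MOD S.card] := (hcyc.pow_apply_eq_pow_apply ha).1 (h.trans hab.symm)
      rw [hk] at hmod
      have := hmod.eq_of_lt_of_lt (by omega) (by omega)
      omega
  obtain ⟨hAcard, hwA⟩ := swap_mul_isCycleOn hj hne hab hmA
  have hba : (σ ^ (k - j)) b = a := by
    rw [← hab, ← Equiv.Perm.mul_apply, ← pow_add, show k - j + j = k by omega, ← hk]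
    exact hcyc.pow_card_apply ha
  have hmB : ∀ m, 0 < m → m < k - j → (σ ^ m) b ≠ b ∧ (σ ^ m) b ≠ a := by
    intro m hm0 hmj
    constructor
    · intro h
      have hd : S.card ∣ m := (hcyc.pow_apply_eq hb).1 h
      rw [hk] at hd
      have := Nat.le_of_dvd hm0 hd
      omega
    · intro h
      have h2 : (σ ^ (m + j)) a = a := by
        rw [pow_add, Equiv.Perm.mul_apply, hab, h]
      have hd : S.card ∣ m + j := (hcyc.pow_apply_eq ha).1 h2
      rw [hk] at hd
      have := Nat.le_of_dvd (by omega) hd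
      omega
  obtain ⟨hBcard, hwB'⟩ := swap_mul_isCycleOn (by omega : 0 < k - j) hne.symm hba hmB
  rw [Equiv.swap_comm b a] at hwB'
  set w := Equiv.swap a b * σ with hw
  have hwB : w.IsCycleOn (B : Set α) := hwB'
  have hAS : A ⊆ S := by
    intro y hy
    obtain ⟨m, _, rfl⟩ := Finset.mem_image.1 hy
    exact powmem a ha m
  have hBS : B ⊆ S := by
    intro y hy
    obtain ⟨m, _, rfl⟩ := Finset.mem_image.1 hy
    exact powmem b hb m
  have hdisjAB : _root_.Disjoint A B := by
    rw [Finset.disjoint_left]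
    rintro y hyA hyB
    obtain ⟨m, hm', rfl⟩ := Finset.mem_image.1 hyA
    obtain ⟨n, hn', hnb⟩ := Finset.mem_image.1 hyB
    rw [Finset.mem_range] at hm' hn'
    have hnb' : (σ ^ (n + j)) a = (σ ^ m) a := by
      rw [pow_add, Equiv.Perm.mul_apply, hab, hnb]
    have hmod : n + j ≡ m [MOD S.card] := (hcyc.pow_apply_eq_pow_apply ha).1 hnb'
    rw [hk] at hmod
    have := hmod.eq_of_lt_of_lt (by omega) (by omega)
    omega
  have hu : A ∪ B = S := by
    apply Finset.eq_of_subset_of_card_le (Finset.union_subset hAS hBS)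
    rw [Finset.card_union_of_disjoint hdisjAB, hAcard, hBcard, hk]
    omega
  have hAinv : ∀ y, (y ∈ A) ↔ (w y ∈ A) := by
    intro y
    constructor
    · intro h
      exact Finset.mem_coe.1 (hwA.1.mapsTo (Finset.mem_coe.2 h))
    · intro h
      have himg : w '' (A : Set α) = (A : Set α) := hwA.1.image_eq
      have h2 : w y ∈ w '' (A : Set α) := by rw [himg]; exact Finset.mem_coe.2 h
      obtain ⟨z, hz, hzy⟩ := h2
      rw [← w.injective hzy]
      exact Finset.mem_coe.1 hz
  have hBinv : ∀ y, (y ∈ B) ↔ (w y ∈ B) := by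
    intro y
    constructor
    · intro h
      exact Finset.mem_coe.1 (hwB.1.mapsTo (Finset.mem_coe.2 h))
    · intro h
      have himg : w '' (B : Set α) = (B : Set α) := hwB.1.image_eq
      have h2 : w y ∈ w '' (B : Set α) := by rw [himg]; exact Finset.mem_coe.2 h
      obtain ⟨z, hz, hzy⟩ := h2
      rw [← w.injective hzy]
      exact Finset.mem_coe.1 hz
  set g₁ := Equiv.Perm.ofSubtype (w.subtypePerm (fun y => (hAinv y).symm)) with hg₁
  set g₂ := Equiv.Perm.ofSubtype (w.subtypePerm (fun y => (hBinv y).symm)) with hg₂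
  have hg₁cyc : g₁.IsCycleOn (A : Set α) := restrict_isCycleOn hAinv hwA
  have hg₂cyc : g₂.IsCycleOn (B : Set α) := restrict_isCycleOn hBinv hwB
  have hg₁sup : g₁.support ⊆ A := restrict_support_subset hAinv
  have hg₂sup : g₂.support ⊆ B := restrict_support_subset hBinv
  have hAne : A.Nonempty := ⟨a, Finset.mem_image.2 ⟨0, Finset.mem_range.2 hj, by simp⟩⟩
  have hBne : B.Nonempty :=
    ⟨b, Finset.mem_image.2 ⟨0, Finset.mem_range.2 (by omega), by simp⟩⟩
  have hτfix : ∀ y ∈ S, τ y = y := by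
    intro y hy
    have : y ∉ τ.support := Finset.disjoint_right.1 hsupτ hy
    exact Equiv.Perm.notMem_support.1 this
  have hSinv : ∀ y, y ∉ S → σ y ∉ S := by
    intro y hy h
    apply hy
    rw [hS, Finset.mem_filter] at h ⊢
    refine ⟨Finset.mem_univ _, ?_⟩
    have := h.2
    rwa [Equiv.Perm.sameCycle_apply_right] at this
  have hw_eq : w = g₁ * (g₂ * τ) := by
    apply Equiv.ext
    intro y
    simp only [Equiv.Perm.mul_apply]
    by_cases hyA : y ∈ A
    · have hyS : y ∈ S := hAS hyA
      rw [hτfix y hyS,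
        ofSubtype_subtypePerm_of_not_mem (fun y => (hBinv y).symm) (Finset.disjoint_left.1 hdisjAB hyA),
        ofSubtype_subtypePerm_of_mem (fun y => (hAinv y).symm) hyA, hw, Equiv.Perm.mul_apply]
    · by_cases hyB : y ∈ B
      · have hyS : y ∈ S := hBS hyB
        rw [hτfix y hyS, ofSubtype_subtypePerm_of_mem (fun y => (hBinv y).symm) hyB]
        have hwyB : w y ∈ B := (hBinv y).1 hyB
        rw [ofSubtype_subtypePerm_of_not_mem (fun y => (hAinv y).symm) (Finset.disjoint_right.1 hdisjAB hwyB),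
          hw, Equiv.Perm.mul_apply]
      · have hyS : y ∉ S := by
          intro h
          rw [← hu, Finset.mem_union] at h
          tauto
        have hσy : σ y ∉ S := hSinv y hyS
        have hcy : c y = y := by
          have : y ∉ c.support := by rw [hsupc]; exact hyS
          exact Equiv.Perm.notMem_support.1 this
        have hτy : τ y = σ y := by
          rw [hτ, Equiv.Perm.mul_apply]
          congr 1
          rw [Equiv.Perm.inv_eq_iff_eq, hcy]
        rw [hτy,
          ofSubtype_subtypePerm_of_not_mem (fun y => (hBinv y).symm) (fun h => hσy (hBS h)),
          ofSubtype_subtypePerm_of_not_mem (fun y => (hAinv y).symm) (fun h => hσy (hAS h))]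
        exact Equiv.swap_apply_of_ne_of_ne (fun h => hσy (h ▸ ha))
          (fun h => hσy (h ▸ hb))
  -- disjointness for the product
  have hd2 : Equiv.Perm.Disjoint g₂ τ := by
    rw [Equiv.Perm.disjoint_iff_disjoint_support]
    exact (hsupτ.symm.mono_left (hg₂sup.trans hBS)).symm.symm
  have hd1 : Equiv.Perm.Disjoint g₁ (g₂ * τ) := by
    rw [Equiv.Perm.disjoint_iff_disjoint_support]
    have hsub : (g₂ * τ).support ⊆ g₂.support ∪ τ.support :=
      Equiv.Perm.support_mul_le g₂ τ
    apply _root_.Disjoint.mono_right hsub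
    rw [Finset.disjoint_union_right]
    constructor
    · exact hdisjAB.mono hg₁sup hg₂sup
    · exact (hsupτ.symm.mono_left (hg₁sup.trans hAS)).symm.symm
  -- fullCycleType computations
  have e1 : fullCycleType w + Multiset.replicate (Fintype.card α) 1
      = fullCycleType g₁ + fullCycleType (g₂ * τ) := by
    rw [hw_eq]; exact fct_mul_of_disjoint hd1
  have e2 : fullCycleType (g₂ * τ) + Multiset.replicate (Fintype.card α) 1
      = fullCycleType g₂ + fullCycleType τ := fct_mul_of_disjoint hd2
  have e3 : fullCycleType σ + Multiset.replicate (Fintype.card α) 1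
      = fullCycleType τ + fullCycleType c := by
    rw [← hστ]; exact fct_mul_of_disjoint hdisj
  have fctc : fullCycleType c
      = {k} + Multiset.replicate (Fintype.card α - k) 1 := by
    have hccyc : c.IsCycle := Equiv.Perm.isCycle_cycleOf σ hx
    rw [fct_def', hccyc.cycleType, hsupc, hk]
  have fctg₁ : fullCycleType g₁ = {j} + Multiset.replicate (Fintype.card α - j) 1 := by
    rw [fct_of_isCycleOn hAne hg₁cyc hg₁sup, hAcard]
  have fctg₂ : fullCycleType g₂
      = {k - j} + Multiset.replicate (Fintype.card α - (k - j)) 1 := by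
    rw [fct_of_isCycleOn hBne hg₂cyc hg₂sup, hBcard]
  have hpair : ({j, k - j} : Multiset ℕ) = {j} + {k - j} := rfl
  have hrep : Multiset.replicate (Fintype.card α - j) (1:ℕ)
      + Multiset.replicate (Fintype.card α - (k - j)) 1
      = Multiset.replicate (Fintype.card α - k) 1
        + Multiset.replicate (Fintype.card α) 1 := by
    rw [← Multiset.replicate_add, ← Multiset.replicate_add]
    congr 1
    omega
  have s1 : fullCycleType w
      + (Multiset.replicate (Fintype.card α) 1 + Multiset.replicate (Fintype.card α) 1)
      = fullCycleType g₁ + fullCycleType g₂ + fullCycleType τ := by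
    rw [← add_assoc, e1, add_assoc, e2, ← add_assoc]
  rw [hpair]
  apply add_right_cancel
    (b := Multiset.replicate (Fintype.card α) (1:ℕ) + Multiset.replicate (Fintype.card α) 1)
  calc fullCycleType w + {k}
        + (Multiset.replicate (Fintype.card α) (1:ℕ) + Multiset.replicate (Fintype.card α) 1)
      = fullCycleType w
        + (Multiset.replicate (Fintype.card α) 1 + Multiset.replicate (Fintype.card α) 1)
        + {k} := by abel
    _ = fullCycleType g₁ + fullCycleType g₂ + fullCycleType τ + {k} := by rw [s1]
    _ = ({j} + Multiset.replicate (Fintype.card α - j) 1)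
        + ({k - j} + Multiset.replicate (Fintype.card α - (k - j)) 1)
        + fullCycleType τ + {k} := by rw [fctg₁, fctg₂]
    _ = fullCycleType τ + {k} + ({j} + {k - j})
        + (Multiset.replicate (Fintype.card α - j) 1
          + Multiset.replicate (Fintype.card α - (k - j)) 1) := by abel
    _ = fullCycleType τ + {k} + ({j} + {k - j})
        + (Multiset.replicate (Fintype.card α - k) 1
          + Multiset.replicate (Fintype.card α) 1) := by rw [hrep]
    _ = (fullCycleType τ + ({k} + Multiset.replicate (Fintype.card α - k) 1))
        + ({j} + {k - j}) + Multiset.replicate (Fintype.card α) 1 := by abel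
    _ = (fullCycleType τ + fullCycleType c)
        + ({j} + {k - j}) + Multiset.replicate (Fintype.card α) 1 := by rw [fctc]
    _ = (fullCycleType σ + Multiset.replicate (Fintype.card α) 1)
        + ({j} + {k - j}) + Multiset.replicate (Fintype.card α) 1 := by rw [e3]
    _ = fullCycleType σ + ({j} + {k - j})
        + (Multiset.replicate (Fintype.card α) 1 + Multiset.replicate (Fintype.card α) 1) := by
        abel

end Aux

theorem card_splitting_pairs {α : Type*} [Fintype α] [DecidableEq α]
    (σ : Equiv.Perm α) (x : α) (S : Finset α)
    (hS : S = Finset.univ.filter fun b => σ.SameCycle x b)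
    (k i : ℕ) (hk : S.card = k) (hk2 : 2 ≤ k) (hi : 0 < i) (hik : i < k) :
    ((S.powersetCard 2).filter (fun t => ∃ a ∈ t, ∃ b ∈ t, a ≠ b ∧
        fullCycleType (Equiv.swap a b * σ) + {k}
          = fullCycleType σ + {i, k - i})).card
      = if i ≠ k - i then k else k / 2 := by
  have hxS : x ∈ S := by rw [hS]; simp [Equiv.Perm.SameCycle.refl]
  have hx : σ x ≠ x := by
    obtain ⟨y, hy, hyx⟩ := Finset.exists_mem_ne (by omega : 1 < S.card) x
    intro h
    apply hyx
    rw [hS, Finset.mem_filter] at hy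
    obtain ⟨n, hn⟩ := hy.2
    rw [← hn, Equiv.Perm.zpow_apply_eq_self_of_apply_eq_self h]
  have hSsup : S = (σ.cycleOf x).support := by
    ext y
    rw [Equiv.Perm.mem_support_cycleOf_iff]
    simp [hS, Equiv.Perm.mem_support, hx]
  have hcyc : σ.IsCycleOn (S : Set α) := by
    rw [hSsup]; exact σ.isCycleOn_support_cycleOf x
  have powmem : ∀ y ∈ S, ∀ m : ℕ, (σ ^ m) y ∈ S := by
    intro y hy m
    rw [hS, Finset.mem_filter] at hy ⊢
    exact ⟨Finset.mem_univ _, hy.2.trans ⟨(m : ℤ), by rw [zpow_natCast]⟩⟩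
  set f : α → Finset α := fun a => {a, (σ ^ i) a} with hf
  have hσi_ne : ∀ a ∈ S, (σ ^ i) a ≠ a := by
    intro a ha h
    have hd := (hcyc.pow_apply_eq ha).1 h
    rw [hk] at hd
    have := Nat.le_of_dvd hi hd
    omega
  have himg : (S.powersetCard 2).filter (fun t => ∃ a ∈ t, ∃ b ∈ t, a ≠ b ∧
        fullCycleType (Equiv.swap a b * σ) + {k}
          = fullCycleType σ + {i, k - i}) = S.image f := by
    ext t
    simp only [Finset.mem_filter, Finset.mem_powersetCard, Finset.mem_image]
    constructor
    · rintro ⟨⟨hts, htc⟩, aa, hat, bb, hbt, hne, heq⟩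
      have haS := hts hat
      have hbS := hts hbt
      have ht : ({aa, bb} : Finset α) = t :=
        Finset.eq_of_subset_of_card_le
          (Finset.insert_subset hat (Finset.singleton_subset_iff.2 hbt))
          (by rw [htc, Finset.card_pair hne])
      obtain ⟨n, hnk, hnab⟩ := hcyc.exists_pow_eq haS hbS
      rw [hk] at hnk
      have hn0 : 0 < n := by
        rcases Nat.eq_zero_or_pos n with h | h
        · subst h; simp at hnab; exact absurd hnab hne
        · exact h
      have hsplit := split_main hS hk hk2 haS hbS hn0 hnk hnab
      rw [heq] at hsplit
      have hpe : ({i, k - i} : Multiset ℕ) = {n, k - n} := add_left_cancel hsplit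
      have hmem : (n : ℕ) ∈ ({i, k - i} : Multiset ℕ) := by rw [hpe]; simp
      simp only [Multiset.insert_eq_cons, Multiset.mem_cons, Multiset.mem_singleton] at hmem
      rcases hmem with h | h
      · refine ⟨aa, haS, ?_⟩
        rw [hf]
        simp only
        rw [← h, hnab, ht]
      · refine ⟨bb, hbS, ?_⟩
        have hia : (σ ^ i) bb = aa := by
          rw [← hnab, ← Equiv.Perm.mul_apply, ← pow_add, show i + n = k by omega, ← hk]
          exact hcyc.pow_card_apply haS
        rw [hf]
        simp only
        rw [hia, Finset.pair_comm, ht]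
    · rintro ⟨aa, haS, rfl⟩
      have hne : aa ≠ (σ ^ i) aa := (hσi_ne aa haS).symm
      have hiaS : (σ ^ i) aa ∈ S := powmem aa haS i
      refine ⟨⟨?_, ?_⟩, aa, ?_, (σ ^ i) aa, ?_, hne, ?_⟩
      · exact Finset.insert_subset haS (Finset.singleton_subset_iff.2 hiaS)
      · exact Finset.card_pair hne
      · exact Finset.mem_insert_self _ _
      · exact Finset.mem_insert_of_mem (Finset.mem_singleton_self _)
      · exact split_main hS hk hk2 haS hiaS hi hik rfl
  rw [himg]
  by_cases hii : i = k - i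
  · rw [if_neg (by simpa using hii)]
    have hk2i : k = 2 * i := by omega
    have hfix2 : ∀ a ∈ S, (σ ^ i) ((σ ^ i) a) = a := by
      intro a ha
      rw [← Equiv.Perm.mul_apply, ← pow_add, show i + i = k by omega, ← hk]
      exact hcyc.pow_card_apply ha
    have hfib : ∀ t ∈ S.image f, (S.filter fun p => f p = t).card = 2 := by
      intro t ht
      obtain ⟨a₀, ha₀, rfl⟩ := Finset.mem_image.1 ht
      have hfe : (S.filter fun p => f p = f a₀) = {a₀, (σ ^ i) a₀} := by
        ext p
        simp only [Finset.mem_filter, Finset.mem_insert, Finset.mem_singleton]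
        constructor
        · rintro ⟨hpS, hpe⟩
          have hp : p ∈ f a₀ := by
            rw [← hpe, hf]
            exact Finset.mem_insert_self _ _
          rw [hf] at hp
          simpa using hp
        · rintro (rfl | rfl)
          · exact ⟨ha₀, rfl⟩
          · refine ⟨powmem a₀ ha₀ i, ?_⟩
            rw [hf]
            simp only
            rw [hfix2 a₀ ha₀, Finset.pair_comm]
      rw [hfe, Finset.card_pair (hσi_ne a₀ ha₀).symm]
    have hsum : S.card = ∑ t ∈ S.image f, (S.filter fun p => f p = t).card :=
      Finset.card_eq_sum_card_fiberwise (fun a ha => Finset.mem_image_of_mem f ha)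
    rw [Finset.sum_congr rfl hfib, Finset.sum_const, smul_eq_mul, hk] at hsum
    omega
  · rw [if_pos hii]
    have hinj : Set.InjOn f S := by
      intro p hp q hq hpq
      have hpm : p ∈ f q := by
        rw [← hpq, hf]; exact Finset.mem_insert_self _ _
      rw [hf] at hpm
      simp only [Finset.mem_insert, Finset.mem_singleton] at hpm
      rcases hpm with h | h
      · exact h
      · have h2 : (σ ^ i) p ∈ f q := by
          rw [← hpq, hf]
          exact Finset.mem_insert_of_mem (Finset.mem_singleton_self _)
        rw [hf] at h2
        simp only [Finset.mem_insert, Finset.mem_singleton] at h2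
        rcases h2 with h2 | h2
        · -- σ^i p = q and p = σ^i q  ⟹ σ^(2i) q = q
          exfalso
          have : (σ ^ (i + i)) q = q := by
            rw [pow_add, Equiv.Perm.mul_apply, ← h, h2]
          have hd := (hcyc.pow_apply_eq (Finset.mem_coe.1 hq)).1 this
          rw [hk] at hd
          obtain ⟨c, hc⟩ := hd
          have hcne : c ≠ 0 := by rintro rfl; omega
          have hclt : c < 2 := by
            by_contra h'
            have : k * 2 ≤ k * c := Nat.mul_le_mul_left k (by omega)
            omega
          have hc1 : c = 1 := by omega
          subst hc1
          omega
        · exact (σ ^ i).injective h2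
    rw [Finset.card_image_of_injOn hinj, hk]
end

section
/- Let m ≥ 1, let q ∈ R = MvPolynomial ℕ+ ℂ, and let N be at least m plus the weighted total degree of q (where the variable p_k has weight k). Then Δ_N(p_m · q) − p_m · Δ_N(q) = m · ( (1/2) Σ_{a=1}^{m−1} p_a p_{m−a} · q + Σ_{k=1}^{N} k · p_{m+k} · (∂q/∂p_k) ). (This is the commutator identity [Δ, a_{−m}] = m L_{−m} between the operator Δ and the Heisenberg creation operator a_{−m} = multiplication by p_m, where L_{−m} is the Virasoro operator of degree m.) -/
open MvPolynomial

/-- The polynomial ring `ℂ[p₁, p₂, …]` in variables indexed by the positive integers. -/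
abbrev R : Type := MvPolynomial ℕ+ ℂ

/-- The truncated operator
`Δ_N q = (1/2) Σ_{i,j=1}^N ( i·j·p_{i+j}·∂²q/∂p_i∂p_j + (i+j)·p_i·p_j·∂q/∂p_{i+j} )`. -/
noncomputable def Δ (N : ℕ) (q : R) : R :=
  (1/2 : ℂ) • ∑ i ∈ Finset.Icc 1 N, ∑ j ∈ Finset.Icc 1 N,
    (((i : ℂ) * (j : ℂ)) •
        (X (i + j).toPNat' * pderiv i.toPNat' (pderiv j.toPNat' q))
      + ((i + j : ℕ) : ℂ) •
        (X i.toPNat' * X j.toPNat' * pderiv (i + j).toPNat' q))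

/-- The weighted total degree of `q`, where the variable `p_k` has weight `k`. -/
noncomputable def wdeg (q : R) : ℕ :=
  MvPolynomial.weightedTotalDegree (fun k : ℕ+ => (k : ℕ)) q

lemma toPNat'_inj (i m : ℕ) (hi : 1 ≤ i) (hm : 1 ≤ m) : i.toPNat' = m.toPNat' ↔ i = m := by
  constructor
  · intro h
    have := congrArg (PNat.val) h
    have h2 : i - 1 = m - 1 := by
      simpa [Nat.toPNat', Nat.succPNat] using this
    omega
  · rintro rfl; rfl

lemma pderiv_X_mul' (i m : ℕ) (q : R) :
    pderiv i.toPNat' (X m.toPNat' * q)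
      = (if i.toPNat' = m.toPNat' then q else 0) + X m.toPNat' * pderiv i.toPNat' q := by
  rw [pderiv_mul, pderiv_X]
  split_ifs with h
  · rw [h, Pi.single_eq_same, one_mul]
  · rw [Pi.single_eq_of_ne (Ne.symm h)]; simp

lemma pderiv2 (i j m : ℕ) (q : R) :
    pderiv i.toPNat' (pderiv j.toPNat' (X m.toPNat' * q))
      = (if j.toPNat' = m.toPNat' then pderiv i.toPNat' q else 0)
        + (if i.toPNat' = m.toPNat' then pderiv j.toPNat' q else 0)
        + X m.toPNat' * pderiv i.toPNat' (pderiv j.toPNat' q) := by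
  rw [pderiv_X_mul', map_add, apply_ite (pderiv i.toPNat'), map_zero, pderiv_X_mul']
  ring

theorem delta_comm_creation (m : ℕ) (hm : 1 ≤ m) (q : R) (N : ℕ)
    (hN : m + wdeg q ≤ N) :
    Δ N (X m.toPNat' * q) - X m.toPNat' * Δ N q
      = (m : ℂ) •
          ((1/2 : ℂ) • ∑ a ∈ Finset.Icc 1 (m - 1),
              X a.toPNat' * X (m - a).toPNat' * q
            + ∑ k ∈ Finset.Icc 1 N,
              (k : ℂ) • (X (m + k).toPNat' * pderiv k.toPNat' q)) := by
  have hmN : m ≤ N := le_trans (Nat.le_add_right m (wdeg q)) hN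
  have hmm : m ∈ Finset.Icc 1 N := Finset.mem_Icc.mpr ⟨hm, hmN⟩
  set K : R := ∑ k ∈ Finset.Icc 1 N, (k : ℂ) • (X (m + k).toPNat' * pderiv k.toPNat' q)
    with hK
  set U : R := ∑ a ∈ Finset.Icc 1 (m - 1), X a.toPNat' * X (m - a).toPNat' * q with hU
  have key : Δ N (X m.toPNat' * q) - X m.toPNat' * Δ N q
      = (1/2 : ℂ) • ∑ i ∈ Finset.Icc 1 N, ∑ j ∈ Finset.Icc 1 N,
          (C ((i : ℂ) * (j : ℂ)) * (X (i + j).toPNat' * (if j = m then pderiv i.toPNat' q else 0))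
            + C ((i : ℂ) * (j : ℂ)) * (X (i + j).toPNat' * (if i = m then pderiv j.toPNat' q else 0))
            + C (((i + j : ℕ)) : ℂ) * (X i.toPNat' * X j.toPNat' * (if i + j = m then q else 0))) := by
    unfold Δ
    rw [mul_smul_comm, ← smul_sub]
    congr 1
    rw [Finset.mul_sum, ← Finset.sum_sub_distrib]
    refine Finset.sum_congr rfl (fun i hi => ?_)
    rw [Finset.mul_sum, ← Finset.sum_sub_distrib]
    refine Finset.sum_congr rfl (fun j hj => ?_)
    have hi1 : 1 ≤ i := (Finset.mem_Icc.mp hi).1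
    have hj1 : 1 ≤ j := (Finset.mem_Icc.mp hj).1
    rw [pderiv2, pderiv_X_mul']
    simp only [toPNat'_inj j m hj1 hm, toPNat'_inj i m hi1 hm,
      toPNat'_inj (i + j) m (by omega) hm, smul_eq_C_mul]
    ring
  have h1 : ∑ i ∈ Finset.Icc 1 N, ∑ j ∈ Finset.Icc 1 N,
      C ((i : ℂ) * (j : ℂ)) * (X (i + j).toPNat' * (if j = m then pderiv i.toPNat' q else 0))
      = (m : ℂ) • K := by
    rw [hK, Finset.smul_sum]
    refine Finset.sum_congr rfl (fun i hi => ?_)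
    have step : ∀ j : ℕ, C ((i : ℂ) * (j : ℂ)) * (X (i + j).toPNat' * (if j = m then pderiv i.toPNat' q else 0))
        = if j = m then C ((i : ℂ) * (m : ℂ)) * (X (i + m).toPNat' * pderiv i.toPNat' q) else 0 := by
      intro j
      split_ifs with h
      · subst h; rfl
      · simp
    rw [Finset.sum_congr rfl (fun j _ => step j), Finset.sum_ite_eq' (Finset.Icc 1 N) m, if_pos hmm,
      add_comm i m, smul_smul, smul_eq_C_mul]
    ring_nf
  have h2 : ∑ i ∈ Finset.Icc 1 N, ∑ j ∈ Finset.Icc 1 N,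
      C ((i : ℂ) * (j : ℂ)) * (X (i + j).toPNat' * (if i = m then pderiv j.toPNat' q else 0))
      = (m : ℂ) • K := by
    have step : ∀ i ∈ Finset.Icc 1 N, (∑ j ∈ Finset.Icc 1 N,
        C ((i : ℂ) * (j : ℂ)) * (X (i + j).toPNat' * (if i = m then pderiv j.toPNat' q else 0)))
        = if i = m then (m : ℂ) • K else 0 := by
      intro i _
      split_ifs with h
      · subst h
        rw [hK, Finset.smul_sum]
        refine Finset.sum_congr rfl (fun j hj => ?_)
        simp only [reduceIte, smul_smul, smul_eq_C_mul, map_mul]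
        ring
      · exact Finset.sum_eq_zero (fun j _ => by simp [h])
    rw [Finset.sum_congr rfl step, Finset.sum_ite_eq' (Finset.Icc 1 N) m, if_pos hmm]
  have h3 : ∑ i ∈ Finset.Icc 1 N, ∑ j ∈ Finset.Icc 1 N,
      C (((i + j : ℕ)) : ℂ) * (X i.toPNat' * X j.toPNat' * (if i + j = m then q else 0))
      = (m : ℂ) • U := by
    have step : ∀ i ∈ Finset.Icc 1 N, (∑ j ∈ Finset.Icc 1 N,
        C (((i + j : ℕ)) : ℂ) * (X i.toPNat' * X j.toPNat' * (if i + j = m then q else 0)))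
        = if i ∈ Finset.Icc 1 (m - 1) then (m : ℂ) • (X i.toPNat' * X (m - i).toPNat' * q) else 0 := by
      intro i hi
      have hi1 : 1 ≤ i := (Finset.mem_Icc.mp hi).1
      split_ifs with h
      · have him : i ≤ m - 1 := (Finset.mem_Icc.mp h).2
        have step2 : ∀ j : ℕ, C (((i + j : ℕ)) : ℂ) * (X i.toPNat' * X j.toPNat' * (if i + j = m then q else 0))
            = if j = m - i then (m : ℂ) • (X i.toPNat' * X (m - i).toPNat' * q) else 0 := by
          intro j
          by_cases hj : j = m - i
          · subst hj
            rw [if_pos (by omega), if_pos (by omega), show i + (m - i) = m by omega,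
              smul_eq_C_mul]
          · rw [if_neg hj, if_neg (by omega)]
            simp
        rw [Finset.sum_congr rfl (fun j _ => step2 j), Finset.sum_ite_eq' (Finset.Icc 1 N) (m - i),
          if_pos (Finset.mem_Icc.mpr ⟨by omega, by omega⟩)]
      · refine Finset.sum_eq_zero (fun j hj => ?_)
        have hj1 : 1 ≤ j := (Finset.mem_Icc.mp hj).1
        rw [if_neg (by simp only [Finset.mem_Icc] at h; omega)]
        simp
    rw [Finset.sum_congr rfl step, Finset.sum_ite_mem,
      Finset.inter_eq_right.mpr (Finset.Icc_subset_Icc le_rfl (by omega)), hU, Finset.smul_sum]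
  rw [key]
  simp only [Finset.sum_add_distrib]
  rw [h1, h2, h3]
  module
end

section
/- Let m ≥ 1, let q ∈ R = MvPolynomial ℕ+ ℂ, and let N be at least m plus the weighted total degree of q (where the variable p_k has weight k). Then Δ_N(m · ∂q/∂p_m) − m · ∂(Δ_N(q))/∂p_m = −m · ( (1/2) Σ_{a=1}^{m−1} a(m−a) · (∂²q/∂p_a∂p_{m−a}) + Σ_{k=1}^{N} (m+k) · p_k · (∂q/∂p_{m+k}) ). (This is the commutator identity [Δ, a_m] = −m L_m between the operator Δ and the Heisenberg annihilation operator a_m = m ∂/∂p_m, where L_m is the Virasoro operator of degree −m.) -/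
open MvPolynomial

lemma pderiv_comm' (i j : ℕ+) (f : R) : pderiv i (pderiv j f) = pderiv j (pderiv i f) := by
  induction f using MvPolynomial.induction_on with
  | C a => simp
  | add p q hp hq => simp [hp, hq]
  | mul_X p k hp =>
    simp only [pderiv_mul, map_add, pderiv_X, Pi.single_apply, hp]
    split_ifs <;> simp_all

lemma toPNat'_inj_s7 {a b : ℕ} (ha : 0 < a) (hb : 0 < b) (h : a.toPNat' = b.toPNat') : a = b := by
  rw [← PNat.toPNat'_coe ha, ← PNat.toPNat'_coe hb, h]

lemma pderiv_toPNat'_X (m a : ℕ) (hm : 0 < m) (ha : 0 < a) :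
    (pderiv m.toPNat') (X a.toPNat' : R) = if a = m then 1 else 0 := by
  rcases eq_or_ne a m with h | h
  · subst h; simp
  · rw [if_neg h, pderiv_X_of_ne (fun hc => h (toPNat'_inj_s7 ha hm hc))]

lemma key (m i j : ℕ) (hm : 0 < m) (hi : 0 < i) (hj : 0 < j) (q : R) :
    ((((i : ℂ) * (j : ℂ)) •
        (X (i + j).toPNat' * pderiv i.toPNat' (pderiv j.toPNat' ((m : ℂ) • pderiv m.toPNat' q)))
      + ((i + j : ℕ) : ℂ) •
        (X i.toPNat' * X j.toPNat' * pderiv (i + j).toPNat' ((m : ℂ) • pderiv m.toPNat' q)))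
    - (m : ℂ) • pderiv m.toPNat'
       (((i : ℂ) * (j : ℂ)) • (X (i + j).toPNat' * pderiv i.toPNat' (pderiv j.toPNat' q))
        + ((i + j : ℕ) : ℂ) • (X i.toPNat' * X j.toPNat' * pderiv (i + j).toPNat' q)))
    = (-(m : ℂ)) •
      ((if i + j = m then ((i : ℂ) * (j : ℂ)) • pderiv i.toPNat' (pderiv j.toPNat' q) else 0)
        + ((if i = m then ((i + j : ℕ) : ℂ) • (X j.toPNat' * pderiv (i + j).toPNat' q) else 0)
          + (if j = m then ((i + j : ℕ) : ℂ) • (X i.toPNat' * pderiv (i + j).toPNat' q) else 0))) := by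
  have c1 : pderiv i.toPNat' (pderiv j.toPNat' (pderiv m.toPNat' q))
      = pderiv m.toPNat' (pderiv i.toPNat' (pderiv j.toPNat' q)) := by
    rw [pderiv_comm' j.toPNat' m.toPNat' q, pderiv_comm' i.toPNat' m.toPNat']
  have c2 : pderiv (i + j).toPNat' (pderiv m.toPNat' q)
      = pderiv m.toPNat' (pderiv (i + j).toPNat' q) := pderiv_comm' _ _ _
  simp only [Derivation.map_smul, map_smul, map_add, pderiv_mul, pderiv_toPNat'_X m (i+j) hm (by omega),
    pderiv_toPNat'_X m i hm hi, pderiv_toPNat'_X m j hm hj, c1, c2,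
    smul_add, mul_smul_comm, smul_smul]
  split_ifs <;> simp [add_mul] <;> module

lemma diag_sum (N m : ℕ) (hm : 1 ≤ m) (hmN : m ≤ N) (f : ℕ → ℕ → R) :
    ∑ i ∈ Finset.Icc 1 N, ∑ j ∈ Finset.Icc 1 N, (if i + j = m then f i j else 0)
      = ∑ a ∈ Finset.Icc 1 (m - 1), f a (m - a) := by
  have step : ∀ i ∈ Finset.Icc 1 N,
      (∑ j ∈ Finset.Icc 1 N, if i + j = m then f i j else 0)
        = if i ∈ Finset.Icc 1 (m - 1) then f i (m - i) else 0 := by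
    intro i hi
    simp only [Finset.mem_Icc] at hi
    rcases lt_or_ge i m with h | h
    · have : ∀ j, (i + j = m) ↔ (j = m - i) := by omega
      simp only [this]
      rw [Finset.sum_ite_eq' (Finset.Icc 1 N) (m - i) (fun j => f i j)]
      rw [if_pos (by simp only [Finset.mem_Icc]; omega), if_pos (by simp only [Finset.mem_Icc]; omega)]
    · rw [if_neg (by simp only [Finset.mem_Icc]; omega)]
      apply Finset.sum_eq_zero
      intro j hj
      simp only [Finset.mem_Icc] at hj
      rw [if_neg (by omega)]
  rw [Finset.sum_congr rfl step, Finset.sum_ite_mem,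
    Finset.inter_eq_right.mpr (Finset.Icc_subset_Icc le_rfl (by omega))]

lemma row_sum (N m : ℕ) (hm : 1 ≤ m) (hmN : m ≤ N) (f : ℕ → ℕ → R) :
    ∑ i ∈ Finset.Icc 1 N, ∑ j ∈ Finset.Icc 1 N, (if i = m then f i j else 0)
      = ∑ j ∈ Finset.Icc 1 N, f m j := by
  rw [Finset.sum_comm]
  apply Finset.sum_congr rfl
  intro j _
  rw [Finset.sum_ite_eq' (Finset.Icc 1 N) m (fun i => f i j),
    if_pos (by simp only [Finset.mem_Icc]; omega)]

lemma col_sum (N m : ℕ) (hm : 1 ≤ m) (hmN : m ≤ N) (f : ℕ → ℕ → R) :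
    ∑ i ∈ Finset.Icc 1 N, ∑ j ∈ Finset.Icc 1 N, (if j = m then f i j else 0)
      = ∑ i ∈ Finset.Icc 1 N, f i m := by
  apply Finset.sum_congr rfl
  intro i _
  rw [Finset.sum_ite_eq' (Finset.Icc 1 N) m (fun j => f i j),
    if_pos (by simp only [Finset.mem_Icc]; omega)]

theorem delta_comm_annihilation (m : ℕ) (hm : 1 ≤ m) (q : R) (N : ℕ)
    (hN : m + wdeg q ≤ N) :
    Δ N ((m : ℂ) • pderiv m.toPNat' q) - (m : ℂ) • pderiv m.toPNat' (Δ N q)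
      = -(m : ℂ) •
          ((1/2 : ℂ) • ∑ a ∈ Finset.Icc 1 (m - 1),
              ((a * (m - a) : ℕ) : ℂ) •
                pderiv a.toPNat' (pderiv (m - a).toPNat' q)
            + ∑ k ∈ Finset.Icc 1 N,
              ((m + k : ℕ) : ℂ) • (X k.toPNat' * pderiv (m + k).toPNat' q)) := by
  have hmN : m ≤ N := le_trans (Nat.le_add_right m (wdeg q)) hN
  unfold Δ
  rw [Derivation.map_smul, smul_comm (m : ℂ) (1/2 : ℂ), ← smul_sub]
  have expand : (m : ℂ) • pderiv m.toPNat'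
        (∑ i ∈ Finset.Icc 1 N, ∑ j ∈ Finset.Icc 1 N,
          (((i : ℂ) * (j : ℂ)) • (X (i + j).toPNat' * pderiv i.toPNat' (pderiv j.toPNat' q))
            + ((i + j : ℕ) : ℂ) • (X i.toPNat' * X j.toPNat' * pderiv (i + j).toPNat' q)))
      = ∑ i ∈ Finset.Icc 1 N, ∑ j ∈ Finset.Icc 1 N, (m : ℂ) • pderiv m.toPNat'
          (((i : ℂ) * (j : ℂ)) • (X (i + j).toPNat' * pderiv i.toPNat' (pderiv j.toPNat' q))
            + ((i + j : ℕ) : ℂ) • (X i.toPNat' * X j.toPNat' * pderiv (i + j).toPNat' q)) := by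
    rw [map_sum, Finset.smul_sum]
    exact Finset.sum_congr rfl fun i _ => by rw [map_sum, Finset.smul_sum]
  rw [expand, ← Finset.sum_sub_distrib]
  have inner : ∀ i ∈ Finset.Icc 1 N,
      (∑ j ∈ Finset.Icc 1 N,
          (((i : ℂ) * (j : ℂ)) •
              (X (i + j).toPNat' * pderiv i.toPNat' (pderiv j.toPNat' ((m : ℂ) • pderiv m.toPNat' q)))
            + ((i + j : ℕ) : ℂ) •
              (X i.toPNat' * X j.toPNat' * pderiv (i + j).toPNat' ((m : ℂ) • pderiv m.toPNat' q)))
        - ∑ j ∈ Finset.Icc 1 N, (m : ℂ) • pderiv m.toPNat'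
            (((i : ℂ) * (j : ℂ)) • (X (i + j).toPNat' * pderiv i.toPNat' (pderiv j.toPNat' q))
              + ((i + j : ℕ) : ℂ) • (X i.toPNat' * X j.toPNat' * pderiv (i + j).toPNat' q)))
      = ∑ j ∈ Finset.Icc 1 N, (-(m : ℂ)) •
          ((if i + j = m then ((i : ℂ) * (j : ℂ)) • pderiv i.toPNat' (pderiv j.toPNat' q) else 0)
            + ((if i = m then ((i + j : ℕ) : ℂ) • (X j.toPNat' * pderiv (i + j).toPNat' q) else 0)
              + (if j = m then ((i + j : ℕ) : ℂ) • (X i.toPNat' * pderiv (i + j).toPNat' q) else 0))) := by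
    intro i hi
    simp only [Finset.mem_Icc] at hi
    rw [← Finset.sum_sub_distrib]
    refine Finset.sum_congr rfl fun j hj => ?_
    simp only [Finset.mem_Icc] at hj
    exact key m i j (by omega) (by omega) (by omega) q
  rw [Finset.sum_congr rfl inner]
  simp only [← Finset.smul_sum, Finset.sum_add_distrib]
  rw [diag_sum N m hm hmN, row_sum N m hm hmN, col_sum N m hm hmN]
  have e1 : ∑ a ∈ Finset.Icc 1 (m - 1), ((a : ℂ) * ((m - a : ℕ) : ℂ)) •
        pderiv a.toPNat' (pderiv (m - a).toPNat' q)
      = ∑ a ∈ Finset.Icc 1 (m - 1), ((a * (m - a) : ℕ) : ℂ) •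
        pderiv a.toPNat' (pderiv (m - a).toPNat' q) := by
    refine Finset.sum_congr rfl fun a _ => ?_
    push_cast
    ring_nf
  have e2 : ∑ i ∈ Finset.Icc 1 N, ((i + m : ℕ) : ℂ) • (X i.toPNat' * pderiv (i + m).toPNat' q)
      = ∑ k ∈ Finset.Icc 1 N, ((m + k : ℕ) : ℂ) • (X k.toPNat' * pderiv (m + k).toPNat' q) := by
    refine Finset.sum_congr rfl fun i _ => ?_
    rw [Nat.add_comm i m]
  rw [e1, e2]
  module
end
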